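/- Let κ be a regular uncountable cardinal. The Fréchet ideal I = {A ⊆ κ : |A| < κ} on κ is not precipitous: there exists a decreasing sequence of I-partitions W_0 ≥ W_1 ≥ ... of κ such that every choice of sets A_n ∈ W_n with A_0 ⊇ A_1 ⊇ ... has empty intersection. -/

import Mathlib

universe u

variable {α : Type u}

/-- `W` is an `I`-partition of `S`: a maximal family of `I`-positive subsets of `S`
that are pairwise almost disjoint modulo `I`. -/
def IsIPartition (I : Set (Set α)) (S : Set α) (W : Set (Set α)) : Prop :=
  (∀ A ∈ W, A ⊆ S ∧ A ∉ I) ∧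
  (∀ A ∈ W, ∀ B ∈ W, A ≠ B → A ∩ B ∈ I) ∧
  (∀ B : Set α, B ⊆ S → B ∉ I → ∃ A ∈ W, A ∩ B ∉ I)

/-- `W₁` refines `W₂`: every member of `W₁` is contained in some member of `W₂`. -/
def Refines (W₁ W₂ : Set (Set α)) : Prop :=
  ∀ A ∈ W₁, ∃ B ∈ W₂, A ⊆ B

noncomputable section FrechetAux

open Classical Set

namespace FrechetAux

variable {α : Type u}

/-- A fixed ambient well-order on `α`. -/
def R : α → α → Prop := WellOrderingRel

instance : IsWellOrder α (R (α := α)) := WellOrderingRel.isWellOrder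

instance (p : Set α) : IsWellOrder (Subtype p) (Subrel (R (α := α)) p) :=
  (inferInstance : IsWellOrder _ (Subrel R (· ∈ p)))

/-- initial segment of `B` below `x` -/
def seg (B : Set α) (x : α) : Set α := {y | y ∈ B ∧ R y x}

/-- position of `x` in `B`: order type of the part of `B` below `x`. -/
def pos (B : Set α) (x : α) : Ordinal.{u} := Ordinal.type (Subrel R (seg B x))

theorem pos_mono {B B' : Set α} (h : B ⊆ B') (x : α) : pos B x ≤ pos B' x := by
  refine RelEmbedding.ordinal_type_le ⟨⟨fun z => ⟨z.1, h z.2.1, z.2.2⟩, ?_⟩, Iff.rfl⟩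
  intro a b hab
  injection hab with h2
  exact Subtype.ext h2

theorem pos_strictMono {B : Set α} {y x : α} (hy : y ∈ B) (hx : x ∈ B) (hyx : R y x) :
    pos B y < pos B x := by
  refine PrincipalSeg.ordinal_type_lt
    (⟨⟨⟨fun z => ⟨z.1, z.2.1, trans_of R z.2.2 hyx⟩, ?_⟩, Iff.rfl⟩, ⟨y, hy, hyx⟩, ?_⟩ :
      PrincipalSeg (Subrel R (seg B y)) (Subrel R (seg B x)))
  · intro a b hab
    injection hab with h2
    exact Subtype.ext h2
  · rintro ⟨z, hzB, hzx⟩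
    constructor
    · rintro ⟨⟨w, hwB, hwy⟩, hw⟩
      have : w = z := congrArg Subtype.val hw
      subst this
      exact hwy
    · intro hzy
      exact ⟨⟨z, hzB, hzy⟩, rfl⟩

/-- The ideal of "small" sets. -/
def Idl (α : Type u) : Set (Set α) := {A : Set α | Cardinal.mk A < Cardinal.mk α}

theorem not_mem_Idl_iff {A : Set α} : A ∉ Idl α ↔ Cardinal.mk A = Cardinal.mk α := by
  constructor
  · intro h
    exact le_antisymm (Cardinal.mk_set_le A) (not_lt.mp h)
  · intro h h'
    exact absurd h' (by simp [Idl, h])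

theorem Idl_mono {A B : Set α} (hAB : A ⊆ B) (hA : A ∉ Idl α) : B ∉ Idl α := by
  intro hB
  exact hA (lt_of_le_of_lt (Cardinal.mk_le_mk_of_subset hAB) hB)

/-- `C` sits skewly inside `B`: every element's position strictly drops. -/
def Skew (C B : Set α) : Prop := ∀ x ∈ C, pos C x < pos B x

/-- Key lemma: every positive set has a positive skew subset. -/
theorem exists_skew_subset (hα : Cardinal.aleph0 < Cardinal.mk α)
    {E : Set α} (hE : E ∉ Idl α) :
    ∃ C : Set α, C ⊆ E ∧ C ∉ Idl α ∧ Skew C E := by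
  classical
  -- the set of elements of `E` having a successor in `E`
  set D : Set α := {y | y ∈ E ∧ ∃ z ∈ E, R y z} with hD
  have wf : WellFounded (R (α := α)) := IsWellFounded.wf
  -- successor function
  set s : α → α := fun y =>
    if h : {z | z ∈ E ∧ R y z}.Nonempty then wf.min _ h else y with hs
  have hsmem : ∀ y ∈ D, s y ∈ E ∧ R y (s y) := by
    rintro y ⟨hyE, z, hzE, hyz⟩
    have hne : {z | z ∈ E ∧ R y z}.Nonempty := ⟨z, hzE, hyz⟩
    have := wf.min_mem _ hne
    simp only [hs, dif_pos hne]
    exact this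
  have hsmin : ∀ y ∈ D, ∀ u, u ∈ E → R y u → ¬ R u (s y) := by
    rintro y ⟨hyE, z, hzE, hyz⟩ u huE hyu
    have hne : {z | z ∈ E ∧ R y z}.Nonempty := ⟨z, hzE, hyz⟩
    have := wf.not_lt_min _ (show u ∈ {z | z ∈ E ∧ R y z} from ⟨huE, hyu⟩)
    simpa only [hs, dif_pos hne] using this
  -- s is monotone-ish: if w, w' ∈ D and R w w' then R (s w) (s w')
  have hsmono : ∀ w ∈ D, ∀ w' ∈ D, R w w' → R (s w) (s w') := by
    intro w hw w' hw' hww'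
    have h1 : ¬ R w' (s w) := hsmin w hw w' hw'.1 hww'
    have h2 : R w' (s w') := (hsmem w' hw').2
    rcases trichotomous_of R (s w) w' with h | h | h
    · exact trans_of R h h2
    · rw [h]; exact h2
    · exact absurd h h1
  have hsinj : Set.InjOn s D := by
    intro y hy y' hy' hss
    rcases trichotomous_of R y y' with h | h | h
    · exact absurd (hss ▸ hsmono y hy y' hy' h) (irrefl_of R (s y'))
    · exact h
    · exact absurd (hss ▸ hsmono y' hy' y hy h) (irrefl_of R (s y'))
  set C : Set α := s '' D with hC
  have hCE : C ⊆ E := by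
    rintro x ⟨y, hy, rfl⟩
    exact (hsmem y hy).1
  -- cardinality: E ∖ D is a subsingleton
  have hsub : (E \ D).Subsingleton := by
    rintro y ⟨hyE, hyD⟩ y' ⟨hy'E, hy'D⟩
    rcases trichotomous_of R y y' with h | h | h
    · exact absurd ⟨hyE, y', hy'E, h⟩ hyD
    · exact h
    · exact absurd ⟨hy'E, y, hyE, h⟩ hy'D
  have hmkE : Cardinal.mk E = Cardinal.mk α := not_mem_Idl_iff.mp hE
  have hDnI : D ∉ Idl α := by
    intro hsmall
    have h1 : Cardinal.mk E ≤ Cardinal.mk D + Cardinal.mk (E \ D : Set α) :=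
      le_trans (Cardinal.mk_le_mk_of_subset (fun y hy => by
        by_cases h : y ∈ D
        · exact Or.inl h
        · exact Or.inr ⟨hy, h⟩)) (Cardinal.mk_union_le _ _)
    have h2 : Cardinal.mk (E \ D : Set α) ≤ 1 := hsub.cardinalMk_le_one
    have h3 : Cardinal.mk D + Cardinal.mk (E \ D : Set α) < Cardinal.mk α :=
      Cardinal.add_lt_of_lt hα.le hsmall (lt_of_le_of_lt h2 (lt_trans (by simp) hα))
    rw [hmkE] at h1
    exact absurd (lt_of_le_of_lt h1 h3) (lt_irrefl _)
  have hCnI : C ∉ Idl α := by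
    have : Cardinal.mk C = Cardinal.mk D := Cardinal.mk_image_eq_of_injOn s D hsinj
    simp only [Idl, Set.mem_setOf_eq, this] at hDnI ⊢
    exact hDnI
  refine ⟨C, hCE, hCnI, ?_⟩
  -- skewness
  rintro x ⟨y, hyD, rfl⟩
  -- embed seg C (s y) into seg E y
  have key : pos C (s y) ≤ pos E y := by
    have pkspec : ∀ (z : α) (hz : z ∈ C),
        ((Set.mem_image s D z).mp hz).choose ∈ D ∧
          s ((Set.mem_image s D z).mp hz).choose = z :=
      fun z hz => ((Set.mem_image s D z).mp hz).choose_spec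
    have hA : ∀ (z : α) (hz : z ∈ C), R z (s y) →
        R ((Set.mem_image s D z).mp hz).choose y := by
      intro z hz hzx
      obtain ⟨hwD, hwz⟩ := pkspec z hz
      rcases trichotomous_of R ((Set.mem_image s D z).mp hz).choose y with h | h | h
      · exact h
      · exfalso
        rw [h] at hwz
        rw [← hwz] at hzx
        exact irrefl_of R _ hzx
      · exfalso
        have h1 : ¬ R ((Set.mem_image s D z).mp hz).choose (s y) :=
          hsmin y hyD _ hwD.1 h
        have h2 := (hsmem _ hwD).2
        rw [hwz] at h2
        exact h1 (trans_of R h2 hzx)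
    refine RelEmbedding.ordinal_type_le
      (⟨⟨fun z => ⟨((Set.mem_image s D z.1).mp z.2.1).choose,
          (pkspec z.1 z.2.1).1.1, hA z.1 z.2.1 z.2.2⟩, ?_⟩, ?_⟩ :
        Subrel R (seg C (s y)) ↪r Subrel R (seg E y))
    · -- injectivity
      intro a b hab
      injection hab with h2
      have ha := (pkspec a.1 a.2.1).2
      have hb := (pkspec b.1 b.2.1).2
      have : a.1 = b.1 := by rw [← ha, ← hb, h2]
      exact Subtype.ext this
    · -- map_rel_iff
      intro a b
      show R _ _ ↔ R a.1 b.1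
      obtain ⟨hwDa, hwa⟩ := pkspec a.1 a.2.1
      obtain ⟨hwDb, hwb⟩ := pkspec b.1 b.2.1
      constructor
      · intro h
        have := hsmono _ hwDa _ hwDb h
        rwa [hwa, hwb] at this
      · intro h
        rcases trichotomous_of R ((Set.mem_image s D a.1).mp a.2.1).choose
            ((Set.mem_image s D b.1).mp b.2.1).choose with h' | h' | h'
        · exact h'
        · exfalso
          have : a.1 = b.1 := by rw [← hwa, ← hwb, h']
          rw [this] at h
          exact irrefl_of R _ h
        · exfalso
          have := hsmono _ hwDb _ hwDa h'
          rw [hwa, hwb] at this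
          exact irrefl_of R _ (trans_of R h this)
  calc pos C (s y) ≤ pos E y := key
    _ < pos E (s y) := pos_strictMono hyD.1 (hsmem y hyD).1 (hsmem y hyD).2

/-- Candidate pieces for the next partition: positive sets sitting skewly
inside some current piece. -/
def Good (W : Set (Set α)) : Set (Set α) :=
  {C | C ∉ Idl α ∧ ∃ A ∈ W, C ⊆ A ∧ Skew C A}

/-- Almost disjoint subfamilies of `Good W`. -/
def Fam (W : Set (Set α)) : Set (Set (Set α)) :=
  {F | F ⊆ Good W ∧ ∀ A ∈ F, ∀ B ∈ F, A ≠ B → A ∩ B ∈ Idl α}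

theorem Idl_down {A B : Set α} (hAB : A ⊆ B) (hB : B ∈ Idl α) : A ∈ Idl α :=
  lt_of_le_of_lt (Cardinal.mk_le_mk_of_subset hAB) hB

theorem exists_maximal_fam (W : Set (Set α)) : ∃ M, Maximal (· ∈ Fam W) M := by
  apply zorn_subset
  intro c hc hchain
  refine ⟨⋃₀ c, ⟨?_, ?_⟩, fun s hs => subset_sUnion_of_mem hs⟩
  · rintro C ⟨F, hF, hCF⟩
    exact (hc hF).1 hCF
  · rintro A ⟨F, hF, hAF⟩ B ⟨F', hF', hBF'⟩ hne
    rcases hchain.total hF hF' with h | h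
    · exact (hc hF').2 A (h hAF) B hBF' hne
    · exact (hc hF).2 A hAF B (h hBF') hne

/-- One refinement step: a maximal almost disjoint family of good sets. -/
def step (W : Set (Set α)) : Set (Set α) := (exists_maximal_fam W).choose

theorem step_spec (W : Set (Set α)) : Maximal (· ∈ Fam W) (step W) :=
  (exists_maximal_fam W).choose_spec

theorem univ_partition : IsIPartition (Idl α) Set.univ ({Set.univ} : Set (Set α)) := by
  refine ⟨?_, ?_, ?_⟩
  · intro A hA
    rw [Set.mem_singleton_iff] at hA
    subst hA
    refine ⟨subset_univ _, not_mem_Idl_iff.mpr ?_⟩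
    simp [Cardinal.mk_univ]
  · intro A hA B hB hne
    rw [Set.mem_singleton_iff] at hA hB
    exact absurd (hA.trans hB.symm) hne
  · intro B _ hB
    exact ⟨Set.univ, rfl, by rwa [Set.univ_inter]⟩

theorem step_partition (hα : Cardinal.aleph0 < Cardinal.mk α) {W : Set (Set α)}
    (hW : IsIPartition (Idl α) Set.univ W) :
    IsIPartition (Idl α) Set.univ (step W) := by
  obtain ⟨hGood, hAD⟩ := (step_spec W).1
  refine ⟨fun A hA => ⟨subset_univ A, (hGood hA).1⟩, hAD, ?_⟩
  intro B _ hB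
  obtain ⟨A, hAW, hAB⟩ := hW.2.2 B (subset_univ B) hB
  obtain ⟨C, hCE, hCnI, hskew⟩ := exists_skew_subset hα hAB
  have hCB : C ⊆ B := hCE.trans inter_subset_right
  have hCGood : C ∈ Good W :=
    ⟨hCnI, A, hAW, hCE.trans inter_subset_left,
      fun x hx => lt_of_lt_of_le (hskew x hx) (pos_mono inter_subset_left x)⟩
  by_contra h
  push_neg at h
  have hins : insert C (step W) ∈ Fam W := by
    refine ⟨?_, ?_⟩
    · rintro X (rfl | hX)
      · exact hCGood
      · exact hGood hX
    · rintro X (rfl | hX) Y (rfl | hY) hne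
      · exact absurd rfl hne
      · refine Idl_down (fun x hx => (⟨hx.2, hCB hx.1⟩ : x ∈ Y ∩ B)) (h Y hY)
      · refine Idl_down (fun x hx => (⟨hx.1, hCB hx.2⟩ : x ∈ X ∩ B)) (h X hX)
      · exact hAD X hX Y hY hne
  have hsub : insert C (step W) ⊆ step W :=
    (step_spec W).2 hins (Set.subset_insert _ _)
  have hCmem : C ∈ step W := hsub (Set.mem_insert _ _)
  have : C ∩ B = C := Set.inter_eq_self_of_subset_left hCB
  exact hCnI (this ▸ h C hCmem)

/-- The sequence of partitions. -/
def Wseq (α : Type u) : ℕ → Set (Set α)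
  | 0 => {Set.univ}
  | n + 1 => step (Wseq α n)

theorem Wseq_partition (hα : Cardinal.aleph0 < Cardinal.mk α) :
    ∀ n, IsIPartition (Idl α) Set.univ (Wseq α n) := by
  intro n
  induction n with
  | zero => exact univ_partition
  | succ n ih => exact step_partition hα ih

end FrechetAux

end FrechetAux

/-- For a regular uncountable cardinal `κ = #α`, the Fréchet ideal
`{A : |A| < κ}` is not precipitous: there is a decreasing sequence of
`I`-partitions of `κ` such that every decreasing choice sequence has empty
intersection. -/
theorem frechet_not_precipitous (hreg : (Cardinal.mk α).IsRegular)
    (hunc : Cardinal.aleph0 < Cardinal.mk α) :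
    ∃ W : ℕ → Set (Set α),
      (∀ n, IsIPartition {A : Set α | Cardinal.mk A < Cardinal.mk α} Set.univ (W n)) ∧
      (∀ n, Refines (W (n + 1)) (W n)) ∧
      ∀ A : ℕ → Set α, (∀ n, A n ∈ W n) → (∀ n, A (n + 1) ⊆ A n) →
        (⋂ n, A n) = ∅ := by
  classical
  refine ⟨FrechetAux.Wseq α, fun n => FrechetAux.Wseq_partition hunc n, ?_, ?_⟩
  · intro n A hA
    obtain ⟨_, P, hPW, hsub, _⟩ := ((FrechetAux.step_spec (FrechetAux.Wseq α n)).1.1) hA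
    exact ⟨P, hPW, hsub⟩
  · intro A hAW hdec
    by_contra hne
    obtain ⟨x, hx⟩ := Set.nonempty_iff_ne_empty.mpr hne
    have hxA : ∀ n, x ∈ A n := fun n => Set.mem_iInter.mp hx n
    have hdesc : ∀ n, FrechetAux.pos (A (n + 1)) x < FrechetAux.pos (A n) x := by
      intro n
      have hGd : A (n + 1) ∈ FrechetAux.Good (FrechetAux.Wseq α n) :=
        ((FrechetAux.step_spec (FrechetAux.Wseq α n)).1.1) (hAW (n + 1))
      obtain ⟨hnI, P, hPW, hsubP, hskew⟩ := hGd
      have hPeq : P = A n := by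
        by_contra hne'
        have hsmall : A n ∩ P ∈ FrechetAux.Idl α :=
          (FrechetAux.Wseq_partition hunc n).2.1 (A n) (hAW n) P hPW (fun h => hne' h.symm)
        exact hnI (FrechetAux.Idl_down (Set.subset_inter (hdec n) hsubP) hsmall)
      have := hskew x (hxA (n + 1))
      rwa [hPeq] at this
    have wfo : WellFounded ((· < ·) : Ordinal.{u} → Ordinal.{u} → Prop) := Ordinal.lt_wf
    set g : ℕ → Ordinal.{u} := fun n => FrechetAux.pos (A n) x with hg
    have hne2 : (Set.range g).Nonempty := ⟨g 0, 0, rfl⟩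
    obtain ⟨n, hn⟩ := wfo.min_mem (Set.range g) hne2
    exact wfo.not_lt_min (Set.range g) ⟨n + 1, rfl⟩ (hn ▸ hdesc n)
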